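/- Let C₀ > 0, c > 0, 0 < γ < 1. Suppose R, R' : ℝ² × ℝ² → ℂ are functions (of (x, ξ)) such that for every ξ with |ξ| > C₀ the functions R(·,ξ), R'(·,ξ) are in L^∞(ℝ²), sup_x |R(x,ξ) − R'(x,ξ)| ≤ c·|ξ|^{−2γ} and sup_x |R'(x,ξ)| ≤ c, and let e₀ : ℝ² × ℝ² → ℝ be positive. Define F(ξ) = ∫_{ℝ²} e^{i(x,ξ)} ( h(x, e₀(x,ξ)|1+R(x,ξ)|)(1+R(x,ξ)) − h(x, e₀(x,ξ)|1+R'(x,ξ)|)(1+R'(x,ξ)) ) dx for |ξ| > C₀, and F(ξ) = 0 for |ξ| ≤ C₀. Then for every t < 2γ − 1 one has ∫_{ℝ²} (1+|ξ|²)^t |F(ξ)|² dξ < ∞. -/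

import Mathlib

open MeasureTheory
open scoped RealInnerProductSpace

lemma integ_of_L2_bddsupp (Ω : Set (EuclideanSpace ℝ (Fin 2)))
    (hΩb : Bornology.IsBounded Ω) (hΩm : MeasurableSet Ω)
    (f : EuclideanSpace ℝ (Fin 2) → ℝ) (hf : MemLp f 2 volume)
    (hfΩ : ∀ x ∉ Ω, f x = 0) : Integrable f volume := by
  have hind : Ω.indicator f = f := by
    funext x; by_cases hx : x ∈ Ω
    · simp [Set.indicator_of_mem hx]
    · simp [Set.indicator_of_notMem hx, hfΩ x hx]
  rw [← hind, integrable_indicator_iff hΩm]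
  haveI : IsFiniteMeasure (volume.restrict Ω) :=
    ⟨by rw [Measure.restrict_apply_univ]; exact hΩb.measure_lt_top⟩
  exact (hf.restrict Ω).integrable one_le_two

lemma inv_le_const_mul_inv (a b K : ℝ) (ha : 0 < a) (hb : 0 < b) (h : b ≤ K * a) :
    a⁻¹ ≤ K * b⁻¹ := by
  rw [inv_le_iff_one_le_mul₀ ha, mul_comm K b⁻¹, mul_assoc, le_inv_mul_iff₀ hb]
  simpa using h

theorem stmt6
    (Ω : Set (EuclideanSpace ℝ (Fin 2)))
    (hΩb : Bornology.IsBounded Ω) (hΩm : MeasurableSet Ω)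
    (α β : EuclideanSpace ℝ (Fin 2) → ℝ)
    (hα0 : ∀ x, 0 ≤ α x) (hβ0 : ∀ x, 0 ≤ β x)
    (hαΩ : ∀ x ∉ Ω, α x = 0) (hβΩ : ∀ x ∉ Ω, β x = 0)
    (hαL2 : MemLp α 2 volume) (hβL2 : MemLp β 2 volume)
    (hαpos : eLpNorm α 2 volume ≠ 0) (hβpos : eLpNorm β 2 volume ≠ 0)
    (h : EuclideanSpace ℝ (Fin 2) → ℝ → ℂ)
    (hhα : ∀ x s, 0 ≤ s → ‖h x s‖ ≤ α x)
    (hhβ : ∀ (x : EuclideanSpace ℝ (Fin 2)) (a : ℝ), 0 < a → ∀ w₁ w₂ : ℂ,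
      ‖h x (a * ‖1 + w₁‖) - h x (a * ‖1 + w₂‖)‖ ≤ β x * ‖w₁ - w₂‖)
    (C₀ c γ : ℝ) (hC₀ : 0 < C₀) (hc : 0 < c) (hγ0 : 0 < γ) (hγ1 : γ < 1)
    (R R' : EuclideanSpace ℝ (Fin 2) → EuclideanSpace ℝ (Fin 2) → ℂ)
    (e₀ : EuclideanSpace ℝ (Fin 2) → EuclideanSpace ℝ (Fin 2) → ℝ)
    (he₀ : ∀ x ξ, 0 < e₀ x ξ)
    (hRdiff : ∀ ξ : EuclideanSpace ℝ (Fin 2), C₀ < ‖ξ‖ →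
      ∀ x, ‖R x ξ - R' x ξ‖ ≤ c * ‖ξ‖ ^ (-(2 * γ)))
    (hR'bdd : ∀ ξ : EuclideanSpace ℝ (Fin 2), C₀ < ‖ξ‖ → ∀ x, ‖R' x ξ‖ ≤ c)
    (hRmeas : ∀ ξ : EuclideanSpace ℝ (Fin 2), C₀ < ‖ξ‖ →
      AEStronglyMeasurable (fun x => h x (e₀ x ξ * ‖1 + R x ξ‖) * (1 + R x ξ)) volume)
    (hR'meas : ∀ ξ : EuclideanSpace ℝ (Fin 2), C₀ < ‖ξ‖ →
      AEStronglyMeasurable (fun x => h x (e₀ x ξ * ‖1 + R' x ξ‖) * (1 + R' x ξ)) volume)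
    (F : EuclideanSpace ℝ (Fin 2) → ℂ) (hFmeas : AEStronglyMeasurable F volume)
    (hF0 : ∀ ξ : EuclideanSpace ℝ (Fin 2), ‖ξ‖ ≤ C₀ → F ξ = 0)
    (hFdef : ∀ ξ : EuclideanSpace ℝ (Fin 2), C₀ < ‖ξ‖ →
      F ξ = ∫ x, Complex.exp (((⟪x, ξ⟫ : ℝ) : ℂ) * Complex.I) *
        (h x (e₀ x ξ * ‖1 + R x ξ‖) * (1 + R x ξ) -
          h x (e₀ x ξ * ‖1 + R' x ξ‖) * (1 + R' x ξ))) :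
    ∀ t : ℝ, t < 2 * γ - 1 →
      Integrable (fun ξ : EuclideanSpace ℝ (Fin 2) =>
        (1 + ‖ξ‖ ^ 2) ^ t * ‖F ξ‖ ^ 2) volume := by
  -- the constant K bounding ‖1 + R x ξ‖
  set K : ℝ := 1 + c + c * C₀ ^ (-(2 * γ)) with hK
  have hKpos : 0 < K := by positivity
  -- the integrable envelope g
  set g : EuclideanSpace ℝ (Fin 2) → ℝ := fun x => α x + K * β x with hg
  have hgint : Integrable g volume := by
    refine Integrable.add (integ_of_L2_bddsupp Ω hΩb hΩm α hαL2 hαΩ) ?_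
    exact ((integ_of_L2_bddsupp Ω hΩb hΩm β hβL2 hβΩ).const_mul K)
  have hgnn : ∀ x, 0 ≤ g x := fun x => by
    have := hα0 x; have := hβ0 x; positivity
  set M : ℝ := c * ∫ x, g x with hM
  have hMnn : 0 ≤ M := mul_nonneg hc.le (integral_nonneg hgnn)
  -- key bound on F
  have key : ∀ ξ : EuclideanSpace ℝ (Fin 2), C₀ < ‖ξ‖ →
      ‖F ξ‖ ≤ M * ‖ξ‖ ^ (-(2 * γ)) := by
    intro ξ hξ
    have hξ0 : 0 < ‖ξ‖ := hC₀.trans hξ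
    -- pointwise bound on the integrand difference
    have hpt : ∀ x, ‖h x (e₀ x ξ * ‖1 + R x ξ‖) * (1 + R x ξ) -
        h x (e₀ x ξ * ‖1 + R' x ξ‖) * (1 + R' x ξ)‖ ≤ g x * (c * ‖ξ‖ ^ (-(2 * γ))) := by
      intro x
      set A := h x (e₀ x ξ * ‖1 + R x ξ‖)
      set B := h x (e₀ x ξ * ‖1 + R' x ξ‖)
      have hsplit : A * (1 + R x ξ) - B * (1 + R' x ξ)
          = (A - B) * (1 + R x ξ) + B * (R x ξ - R' x ξ) := by ring
      have hAB : ‖A - B‖ ≤ β x * ‖R x ξ - R' x ξ‖ := hhβ x _ (he₀ x ξ) _ _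
      have hBα : ‖B‖ ≤ α x := by
        refine hhα x _ ?_
        exact mul_nonneg (he₀ x ξ).le (norm_nonneg _)
      have hd : ‖R x ξ - R' x ξ‖ ≤ c * ‖ξ‖ ^ (-(2 * γ)) := hRdiff ξ hξ x
      have hxiC : ‖ξ‖ ^ (-(2 * γ)) ≤ C₀ ^ (-(2 * γ)) :=
        Real.rpow_le_rpow_of_nonpos hC₀ hξ.le (by nlinarith)
      have hRb : ‖1 + R x ξ‖ ≤ K := by
        have h1 : ‖R x ξ‖ ≤ ‖R' x ξ‖ + ‖R x ξ - R' x ξ‖ := by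
          have := norm_add_le (R' x ξ) (R x ξ - R' x ξ)
          simpa using this
        have h2 : ‖R x ξ‖ ≤ c + c * C₀ ^ (-(2 * γ)) := by
          have := hR'bdd ξ hξ x
          have h3 : c * ‖ξ‖ ^ (-(2 * γ)) ≤ c * C₀ ^ (-(2 * γ)) :=
            mul_le_mul_of_nonneg_left hxiC hc.le
          linarith
        calc ‖1 + R x ξ‖ ≤ ‖(1 : ℂ)‖ + ‖R x ξ‖ := norm_add_le _ _
          _ ≤ 1 + (c + c * C₀ ^ (-(2 * γ))) := by rw [norm_one]; linarith
          _ = K := by rw [hK]; ring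
      calc ‖A * (1 + R x ξ) - B * (1 + R' x ξ)‖
          = ‖(A - B) * (1 + R x ξ) + B * (R x ξ - R' x ξ)‖ := by rw [hsplit]
        _ ≤ ‖(A - B) * (1 + R x ξ)‖ + ‖B * (R x ξ - R' x ξ)‖ := norm_add_le _ _
        _ = ‖A - B‖ * ‖1 + R x ξ‖ + ‖B‖ * ‖R x ξ - R' x ξ‖ := by
            rw [norm_mul, norm_mul]
        _ ≤ (β x * (c * ‖ξ‖ ^ (-(2 * γ)))) * K + α x * (c * ‖ξ‖ ^ (-(2 * γ)))  := by
            have h4 : ‖A - B‖ * ‖1 + R x ξ‖ ≤ (β x * ‖R x ξ - R' x ξ‖) * K := by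
              apply mul_le_mul hAB hRb (norm_nonneg _)
              exact mul_nonneg (hβ0 x) (norm_nonneg _)
            have h5 : (β x * ‖R x ξ - R' x ξ‖) * K ≤ (β x * (c * ‖ξ‖ ^ (-(2 * γ)))) * K := by
              apply mul_le_mul_of_nonneg_right _ hKpos.le
              exact mul_le_mul_of_nonneg_left hd (hβ0 x)
            have h6 : ‖B‖ * ‖R x ξ - R' x ξ‖ ≤ α x * (c * ‖ξ‖ ^ (-(2 * γ))) := by
              apply mul_le_mul hBα hd (norm_nonneg _) (hα0 x)
            linarith
        _ = g x * (c * ‖ξ‖ ^ (-(2 * γ))) := by rw [hg]; ring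
    rw [hFdef ξ hξ]
    calc ‖∫ x, Complex.exp (((⟪x, ξ⟫ : ℝ) : ℂ) * Complex.I) *
        (h x (e₀ x ξ * ‖1 + R x ξ‖) * (1 + R x ξ) -
          h x (e₀ x ξ * ‖1 + R' x ξ‖) * (1 + R' x ξ))‖
        ≤ ∫ x, ‖Complex.exp (((⟪x, ξ⟫ : ℝ) : ℂ) * Complex.I) *
        (h x (e₀ x ξ * ‖1 + R x ξ‖) * (1 + R x ξ) -
          h x (e₀ x ξ * ‖1 + R' x ξ‖) * (1 + R' x ξ))‖ := norm_integral_le_integral_norm _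
      _ = ∫ x, ‖h x (e₀ x ξ * ‖1 + R x ξ‖) * (1 + R x ξ) -
          h x (e₀ x ξ * ‖1 + R' x ξ‖) * (1 + R' x ξ)‖ := by
          congr 1; funext x
          rw [norm_mul, Complex.norm_exp_ofReal_mul_I, one_mul]
      _ ≤ ∫ x, g x * (c * ‖ξ‖ ^ (-(2 * γ))) := by
          refine integral_mono_of_nonneg ?_ (hgint.mul_const _) ?_
          · exact Filter.Eventually.of_forall fun x => norm_nonneg _
          · exact Filter.Eventually.of_forall hpt
      _ = (∫ x, g x) * (c * ‖ξ‖ ^ (-(2 * γ))) := integral_mul_const _ _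
      _ = M * ‖ξ‖ ^ (-(2 * γ)) := by rw [hM]; ring
  -- conclude
  intro t ht
  set K' : ℝ := (1 + C₀⁻¹ ^ 2) ^ (2 * γ) with hK'
  have hK'pos : 0 < K' := Real.rpow_pos_of_pos (by positivity) _
  set D : ℝ := M ^ 2 * K' with hD
  have hDnn : 0 ≤ D := by positivity
  have hexp : -(4 * γ - 2 * t) / 2 = t - 2 * γ := by ring
  have hbase : Integrable
      (fun ξ : EuclideanSpace ℝ (Fin 2) => D * (1 + ‖ξ‖ ^ 2) ^ (t - 2 * γ)) volume := by
    have h2r : ((Module.finrank ℝ (EuclideanSpace ℝ (Fin 2)) : ℝ)) < 4 * γ - 2 * t := by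
      simp only [finrank_euclideanSpace_fin]
      push_cast; linarith
    have h0 := (integrable_rpow_neg_one_add_norm_sq (E := EuclideanSpace ℝ (Fin 2))
      (μ := volume) (r := 4 * γ - 2 * t) h2r).const_mul D
    have heq : (fun ξ : EuclideanSpace ℝ (Fin 2) =>
        D * (1 + ‖ξ‖ ^ 2) ^ (-(4 * γ - 2 * t) / 2)) =
        fun ξ : EuclideanSpace ℝ (Fin 2) => D * (1 + ‖ξ‖ ^ 2) ^ (t - 2 * γ) := by
      funext ξ; rw [hexp]
    rw [← heq]; exact h0
  refine hbase.mono' ?_ (Filter.Eventually.of_forall ?_)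
  · -- measurability
    have m1 : Continuous fun ξ : EuclideanSpace ℝ (Fin 2) => (1 + ‖ξ‖ ^ 2) ^ t := by
      apply Continuous.rpow_const (continuous_const.add (continuous_norm.pow 2))
      intro ξ; left; exact (by positivity : (0:ℝ) < 1 + ‖ξ‖ ^ 2).ne'
    have m2 : AEStronglyMeasurable
        (fun ξ : EuclideanSpace ℝ (Fin 2) => ‖F ξ‖ ^ 2) volume := by
      simp_rw [sq]
      exact hFmeas.norm.mul hFmeas.norm
    exact m1.aestronglyMeasurable.mul m2
  · intro ξ
    have hb0 : (0:ℝ) < 1 + ‖ξ‖ ^ 2 := by positivity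
    by_cases hξ : ‖ξ‖ ≤ C₀
    · rw [hF0 ξ hξ]
      simp only [norm_zero]
      rw [Real.norm_of_nonneg (by positivity)]
      have : (0:ℝ) ≤ D * (1 + ‖ξ‖ ^ 2) ^ (t - 2 * γ) := by positivity
      simpa using this
    · push_neg at hξ
      have hξ0 : (0:ℝ) < ‖ξ‖ := hC₀.trans hξ
      rw [Real.norm_of_nonneg (by positivity)]
      have h1 : ‖F ξ‖ ^ 2 ≤ (M * ‖ξ‖ ^ (-(2 * γ))) ^ 2 :=
        pow_le_pow_left₀ (norm_nonneg _) (key ξ hξ) 2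
      have h2 : (M * ‖ξ‖ ^ (-(2 * γ))) ^ 2 = M ^ 2 * ‖ξ‖ ^ (-(2 * γ) * 2) := by
        rw [mul_pow]
        congr 1
        rw [← Real.rpow_natCast (‖ξ‖ ^ (-(2 * γ))) 2, ← Real.rpow_mul hξ0.le]
        norm_num
      -- key radial estimate
      have h3 : ‖ξ‖ ^ (-(2 * γ) * 2) ≤ K' * (1 + ‖ξ‖ ^ 2) ^ (-(2 * γ)) := by
        have hsq : (1:ℝ) + ‖ξ‖ ^ 2 ≤ (1 + C₀⁻¹ ^ 2) * ‖ξ‖ ^ 2 := by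
          have : (1:ℝ) ≤ C₀⁻¹ ^ 2 * ‖ξ‖ ^ 2 := by
            rw [← mul_pow]
            have : (1:ℝ) ≤ C₀⁻¹ * ‖ξ‖ := by
              rw [← div_eq_inv_mul, le_div_iff₀ hC₀]; linarith
            nlinarith
          nlinarith
        have hmono : (1 + ‖ξ‖ ^ 2) ^ (2 * γ) ≤ K' * (‖ξ‖ ^ 2) ^ (2 * γ) := by
          calc (1 + ‖ξ‖ ^ 2) ^ (2 * γ)
              ≤ ((1 + C₀⁻¹ ^ 2) * ‖ξ‖ ^ 2) ^ (2 * γ) :=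
                Real.rpow_le_rpow hb0.le hsq (by positivity)
            _ = K' * (‖ξ‖ ^ 2) ^ (2 * γ) := by
                rw [Real.mul_rpow (by positivity) (by positivity)]
        have hx2 : (‖ξ‖ ^ 2 : ℝ) ^ (2 * γ) = ‖ξ‖ ^ (2 * (2 * γ)) := by
          rw [← Real.rpow_natCast ‖ξ‖ 2, ← Real.rpow_mul hξ0.le]
          norm_num
        rw [hx2] at hmono
        have e1 : -(2 * γ) * 2 = -(2 * (2 * γ)) := by ring
        rw [e1, Real.rpow_neg hξ0.le, Real.rpow_neg hb0.le]
        exact inv_le_const_mul_inv _ _ _ (Real.rpow_pos_of_pos hξ0 _)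
          (Real.rpow_pos_of_pos hb0 _) hmono
      calc (1 + ‖ξ‖ ^ 2) ^ t * ‖F ξ‖ ^ 2
          ≤ (1 + ‖ξ‖ ^ 2) ^ t * (M ^ 2 * (K' * (1 + ‖ξ‖ ^ 2) ^ (-(2 * γ)))) := by
            apply mul_le_mul_of_nonneg_left _ (Real.rpow_pos_of_pos hb0 t).le
            calc ‖F ξ‖ ^ 2 ≤ M ^ 2 * ‖ξ‖ ^ (-(2 * γ) * 2) := h1.trans_eq h2
              _ ≤ M ^ 2 * (K' * (1 + ‖ξ‖ ^ 2) ^ (-(2 * γ))) :=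
                  mul_le_mul_of_nonneg_left h3 (by positivity)
        _ = D * (1 + ‖ξ‖ ^ 2) ^ (t - 2 * γ) := by
            rw [hD, sub_eq_add_neg, Real.rpow_add hb0]; ring
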